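/- Let G(t,x) = (4πt)^{−1/2} exp(−x²/(4t)) and Ḡ(t,x,y) = G(t, x − y) − G(t, x + y). Let t > 0, 1 ≤ r ≤ ∞, and let f : [0,∞) → ℝ be differentiable with f(0) = 0, f ∈ L^r(0,∞) and f' ∈ L^r(0,∞). Then for every x > 0, the map x ↦ (Ḡ(t,·)*_D f)(x) = ∫₀^∞ Ḡ(t,x,y) f(y) dy is differentiable at x with derivative d/dx (Ḡ(t,·)*_D f)(x) = ∫_ℝ G(t, x − y) (f')^{even}(y) dy, where (f')^{even}(y) = f'(|y|) is the even extension of f'. -/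

import Mathlib

open MeasureTheory
open scoped ENNReal

/-- The one-dimensional heat kernel `G(t,x) = (4πt)^{−1/2} exp(−x²/(4t))`. -/
noncomputable def heatG (t x : ℝ) : ℝ :=
  (Real.sqrt (4 * Real.pi * t))⁻¹ * Real.exp (-(x ^ 2) / (4 * t))

namespace Stmt14Aux

open Set Filter Real

lemma heatG_eq (t : ℝ) (u : ℝ) :
    heatG t u = (Real.sqrt (4 * Real.pi * t))⁻¹ * Real.exp (-(4*t)⁻¹ * u^2) := by
  unfold heatG
  congr 1
  congr 1
  ring

lemma heatG_nonneg (t u : ℝ) : 0 ≤ heatG t u :=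
  mul_nonneg (inv_nonneg.2 (Real.sqrt_nonneg _)) (Real.exp_pos _).le

lemma hasDerivAt_heatG {t : ℝ} (ht : 0 < t) (u : ℝ) :
    HasDerivAt (heatG t) (-(u/(2*t)) * heatG t u) u := by
  have h1 : HasDerivAt (fun v : ℝ => -(v^2)/(4*t)) (-(((2:ℕ):ℝ) * u^1)/(4*t)) u :=
    ((hasDerivAt_pow 2 u).neg).div_const (4*t)
  have h2 := (h1.exp).const_mul ((Real.sqrt (4 * Real.pi * t))⁻¹)
  refine h2.congr_deriv ?_
  unfold heatG
  field_simp
  ring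

/-- `|u| e^{-bu²} ≤ √(2/b) e^{-(b/2)u²}`. -/
lemma abs_mul_exp_le {b : ℝ} (hb : 0 < b) (u : ℝ) :
    |u| * Real.exp (-b * u^2) ≤ Real.sqrt (2/b) * Real.exp (-(b/2) * u^2) := by
  have h0 : (b/2) * u^2 ≤ Real.exp ((b/2) * u^2) := by
    nlinarith [Real.add_one_le_exp ((b/2)*u^2)]
  have h1 : u^2 ≤ (2/b) * Real.exp ((b/2) * u^2) := by
    calc u^2 = (2/b) * ((b/2) * u^2) := by field_simp
      _ ≤ (2/b) * Real.exp ((b/2) * u^2) :=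
          mul_le_mul_of_nonneg_left h0 (by positivity)
  have h2 : |u| ≤ Real.sqrt (2/b) * Real.exp ((b/4) * u^2) := by
    have : |u| = Real.sqrt (u^2) := (Real.sqrt_sq_eq_abs u).symm
    rw [this]
    have hexp : Real.exp ((b/2) * u^2) = (Real.exp ((b/4) * u^2))^2 := by
      rw [← Real.exp_nat_mul]; congr 1; push_cast; ring
    calc Real.sqrt (u^2) ≤ Real.sqrt ((2/b) * Real.exp ((b/2) * u^2)) :=
          Real.sqrt_le_sqrt h1
      _ = Real.sqrt (2/b) * Real.sqrt ((Real.exp ((b/4) * u^2))^2) := by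
          rw [← Real.sqrt_mul (by positivity), hexp]
      _ = Real.sqrt (2/b) * Real.exp ((b/4) * u^2) := by
          rw [Real.sqrt_sq (Real.exp_pos _).le]
  calc |u| * Real.exp (-b * u^2) ≤
      (Real.sqrt (2/b) * Real.exp ((b/4) * u^2)) * Real.exp (-b * u^2) :=
        mul_le_mul_of_nonneg_right h2 (Real.exp_pos _).le
    _ = Real.sqrt (2/b) * Real.exp ((b/4 - b) * u^2) := by
        rw [mul_assoc, ← Real.exp_add]; congr 2; ring
    _ ≤ Real.sqrt (2/b) * Real.exp (-(b/2) * u^2) := by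
        apply mul_le_mul_of_nonneg_left _ (Real.sqrt_nonneg _)
        apply Real.exp_le_exp.2
        nlinarith [sq_nonneg u]

/-- shift lemma: if `|w - v| ≤ 1` then `e^{-βw²} ≤ e^β e^{-(β/2)v²}`. -/
lemma exp_shift {β : ℝ} (hβ : 0 < β) {v w : ℝ} (h : |w - v| ≤ 1) :
    Real.exp (-β * w^2) ≤ Real.exp β * Real.exp (-(β/2) * v^2) := by
  rw [← Real.exp_add]
  apply Real.exp_le_exp.2
  have h2 : (w - v)^2 ≤ 1 := by
    have := abs_nonneg (w - v)
    nlinarith [sq_abs (w - v)]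
  nlinarith [sq_nonneg (v - 2*w)]

/-- `(1+y) e^{-b(y-a)²} ≤ (1+|a|)(1+√(2/b)) e^{-(b/2)(y-a)²}` for `y ≥ 0`. -/
lemma one_add_gauss_le {b : ℝ} (hb : 0 < b) (a y : ℝ) (hy : 0 ≤ y) :
    (1 + y) * Real.exp (-b * (y - a)^2) ≤
      (1 + |a|) * (1 + Real.sqrt (2/b)) * Real.exp (-(b/2) * (y - a)^2) := by
  have h1 : 1 + y ≤ (1 + |a|) * (1 + |y - a|) := by
    have h2 : y ≤ |y - a| + |a| := by
      calc y ≤ |y| := le_abs_self y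
        _ = |y - a + a| := by ring_nf
        _ ≤ |y - a| + |a| := abs_add_le _ _
    nlinarith [abs_nonneg (y - a), abs_nonneg a, mul_nonneg (abs_nonneg a) (abs_nonneg (y-a))]
  calc (1 + y) * Real.exp (-b * (y - a)^2)
      ≤ ((1 + |a|) * (1 + |y - a|)) * Real.exp (-b * (y - a)^2) :=
        mul_le_mul_of_nonneg_right h1 (Real.exp_pos _).le
    _ = (1 + |a|) * (Real.exp (-b * (y-a)^2) + |y - a| * Real.exp (-b * (y-a)^2)) := by ring
    _ ≤ (1 + |a|) * (Real.exp (-(b/2) * (y-a)^2) + Real.sqrt (2/b) * Real.exp (-(b/2) * (y-a)^2)) := by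
        apply mul_le_mul_of_nonneg_left _ (by positivity)
        apply add_le_add
        · apply Real.exp_le_exp.2; nlinarith [sq_nonneg (y - a)]
        · exact abs_mul_exp_le hb (y - a)
    _ = (1 + |a|) * (1 + Real.sqrt (2/b)) * Real.exp (-(b/2) * (y - a)^2) := by ring

lemma gausspoly_int (C a : ℝ) {b : ℝ} (hb : 0 < b) :
    Integrable (fun y : ℝ => C * (1 + |y - a|) * Real.exp (-b * (y - a)^2)) volume := by
  have h3 : Integrable (fun v : ℝ => |v| * Real.exp (-b * v^2)) volume := by
    have h2 := (integrable_mul_exp_neg_mul_sq hb).abs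
    apply h2.congr
    filter_upwards with v
    rw [abs_mul, abs_of_pos (Real.exp_pos _)]
  have h1 : Integrable (fun v : ℝ => C * ((1 + |v|) * Real.exp (-b * v^2))) volume := by
    apply Integrable.const_mul
    have := (integrable_exp_neg_mul_sq hb).add h3
    apply this.congr
    filter_upwards with v
    simp only [Pi.add_apply]
    ring
  have := h1.comp_sub_right a
  apply this.congr
  filter_upwards with v
  ring

/-- On `(0,∞)`, `K(1+y)e^{-b(y-a)²}` is integrable. -/
lemma int_one_add_gauss {b : ℝ} (hb : 0 < b) (K a : ℝ) :
    Integrable (fun y : ℝ => K * (1 + y) * Real.exp (-b * (y - a)^2))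
      (volume.restrict (Set.Ioi 0)) := by
  apply Integrable.mono' (((gausspoly_int (|K| * (1 + |a|)) a hb)).restrict (s := Set.Ioi 0))
  · apply Continuous.aestronglyMeasurable
    continuity
  · filter_upwards [ae_restrict_mem measurableSet_Ioi] with y hy
    have hy0 : (0:ℝ) < y := hy
    have h1 : 1 + y ≤ (1 + |a|) * (1 + |y - a|) := by
      have h2 : y ≤ |y - a| + |a| := by
        calc y ≤ |y| := le_abs_self y
          _ = |y - a + a| := by ring_nf
          _ ≤ |y - a| + |a| := abs_add_le _ _
      nlinarith [abs_nonneg (y - a), abs_nonneg a, mul_nonneg (abs_nonneg a) (abs_nonneg (y-a))]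
    have : ‖K * (1 + y) * Real.exp (-b * (y - a)^2)‖
        = |K| * (1 + y) * Real.exp (-b * (y - a)^2) := by
      rw [norm_eq_abs, abs_mul, abs_mul, abs_of_pos (Real.exp_pos _),
        abs_of_pos (by linarith : (0:ℝ) < 1 + y)]
    rw [this]
    have hKa : |K| * (1 + y) ≤ |K| * (1 + |a|) * (1 + |y - a|) := by
      rw [mul_assoc]
      exact mul_le_mul_of_nonneg_left h1 (abs_nonneg K)
    exact mul_le_mul_of_nonneg_right hKa (Real.exp_pos _).le

lemma tendsto_gauss {b : ℝ} (hb : 0 < b) (K a : ℝ) :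
    Tendsto (fun y : ℝ => K * Real.exp (-b * (y - a)^2)) atTop (nhds 0) := by
  have h0 : Tendsto (fun y : ℝ => y - a) atTop atTop :=
    tendsto_atTop_add_const_right atTop (-a) tendsto_id
  have h1 : Tendsto (fun y : ℝ => (y - a)^2) atTop atTop :=
    (tendsto_pow_atTop two_ne_zero).comp h0
  have h2 : Tendsto (fun y : ℝ => -b * (y - a)^2) atTop atBot := by
    have h3 := (h1.const_mul_atTop hb)
    have h4 : Tendsto (fun y : ℝ => -(b * (y - a)^2)) atTop atBot :=
      tendsto_neg_atBot_iff.mpr h3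
    simpa [neg_mul] using h4
  have h4 : Tendsto (fun y : ℝ => Real.exp (-b * (y - a)^2)) atTop (nhds 0) :=
    Real.tendsto_exp_atBot.comp h2
  have := h4.const_mul K
  simpa using this


/-- Growth bound `|f y| ≤ N (1+y)` from `f(0)=0` and `f' ∈ L^r`. -/
lemma growth {r : ℝ≥0∞} (hr : 1 ≤ r) {f : ℝ → ℝ} (hf0 : f 0 = 0)
    (hdiff : DifferentiableOn ℝ f (Set.Ici 0))
    (hf'r : MemLp (derivWithin f (Set.Ici 0)) r (volume.restrict (Set.Ioi 0))) :
    ∃ A : ℝ, 0 ≤ A ∧ ∀ y : ℝ, 0 ≤ y → |f y| ≤ A * (1 + y) := by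
  set g := derivWithin f (Set.Ici 0) with hg
  refine ⟨(eLpNorm g r (volume.restrict (Set.Ioi 0))).toReal, ENNReal.toReal_nonneg,
    fun y hy => ?_⟩
  set N := (eLpNorm g r (volume.restrict (Set.Ioi 0))).toReal with hN
  have hN0 : 0 ≤ N := ENNReal.toReal_nonneg
  set ν := volume.restrict (Set.Ioc (0:ℝ) y) with hν
  have hνle : ν ≤ volume.restrict (Set.Ioi (0:ℝ)) :=
    Measure.restrict_mono Set.Ioc_subset_Ioi_self le_rfl
  have hmem : MemLp g r ν := hf'r.mono_measure hνle
  -- Hölder: L¹ norm bounded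
  have huniv : ν Set.univ = ENNReal.ofReal y := by
    rw [hν, Measure.restrict_apply_univ, Real.volume_Ioc, sub_zero]
  have hexp01 : 0 ≤ 1 / (1:ℝ≥0∞).toReal - 1 / r.toReal ∧
      1 / (1:ℝ≥0∞).toReal - 1 / r.toReal ≤ 1 := by
    constructor
    · rcases eq_or_ne r ∞ with h | h
      · simp [h]
      · have hr1 : 1 ≤ r.toReal := by
          rw [← ENNReal.toReal_one]
          exact ENNReal.toReal_mono h hr
        have : 1 / r.toReal ≤ 1 := by
          rw [div_le_one (by linarith)]; linarith
        simp only [ENNReal.toReal_one]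
        linarith
    · rcases eq_or_ne r ∞ with h | h
      · simp [h]
      · have hr1 : 1 ≤ r.toReal := by
          rw [← ENNReal.toReal_one]
          exact ENNReal.toReal_mono h hr
        have : 0 ≤ 1 / r.toReal := by positivity
        simp only [ENNReal.toReal_one]
        linarith
  have hmeas : ν Set.univ ^ (1 / (1:ℝ≥0∞).toReal - 1 / r.toReal) ≤ ENNReal.ofReal (1 + y) := by
    rw [huniv, ENNReal.ofReal_rpow_of_nonneg hy hexp01.1]
    apply ENNReal.ofReal_le_ofReal
    rcases le_or_gt y 1 with h | h
    · have := Real.rpow_le_one hy h hexp01.1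
      linarith
    · calc y ^ (1 / (1:ℝ≥0∞).toReal - 1 / r.toReal) ≤ y ^ (1:ℝ) :=
          Real.rpow_le_rpow_of_exponent_le h.le hexp01.2
        _ = y := Real.rpow_one y
        _ ≤ 1 + y := by linarith
  have h1 : eLpNorm g 1 ν ≤ eLpNorm g r (volume.restrict (Set.Ioi 0)) * ENNReal.ofReal (1 + y) := by
    calc eLpNorm g 1 ν ≤ eLpNorm g r ν * ν Set.univ ^ (1 / (1:ℝ≥0∞).toReal - 1 / r.toReal) :=
          eLpNorm_le_eLpNorm_mul_rpow_measure_univ hr hmem.1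
      _ ≤ eLpNorm g r (volume.restrict (Set.Ioi 0)) * ENNReal.ofReal (1 + y) :=
          mul_le_mul' (eLpNorm_mono_measure g hνle) hmeas
  have hfin : eLpNorm g r (volume.restrict (Set.Ioi 0)) * ENNReal.ofReal (1 + y) ≠ ∞ :=
    ENNReal.mul_ne_top hf'r.2.ne ENNReal.ofReal_ne_top
  have hint : IntegrableOn g (Set.Ioc 0 y) volume :=
    memLp_one_iff_integrable.mp ⟨hmem.1, lt_of_le_of_lt h1 hfin.lt_top⟩
  -- FTC
  have hftc : f y = ∫ s in (0:ℝ)..y, g s := by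
    rw [intervalIntegral.integral_eq_sub_of_hasDeriv_right_of_le hy
      (hdiff.continuousOn.mono (fun z hz => hz.1))
      (fun s hs => ((hdiff s (le_of_lt hs.1)).hasDerivWithinAt.hasDerivAt
        (Ici_mem_nhds hs.1)).hasDerivWithinAt)
      ((intervalIntegrable_iff_integrableOn_Ioc_of_le hy).mpr hint), hf0, sub_zero]
  have habs : |f y| ≤ ∫ s in Set.Ioc (0:ℝ) y, ‖g s‖ := by
    rw [hftc]
    have h2 := intervalIntegral.norm_integral_le_integral_norm (a := (0:ℝ)) (b := y)
      (f := g) (μ := volume) hy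
    rw [Real.norm_eq_abs] at h2
    calc |∫ s in (0:ℝ)..y, g s| ≤ ∫ s in (0:ℝ)..y, ‖g s‖ := h2
      _ = ∫ s in Set.Ioc (0:ℝ) y, ‖g s‖ := by
        rw [intervalIntegral.integral_of_le hy]
  have heq : ∫ s in Set.Ioc (0:ℝ) y, ‖g s‖ = (eLpNorm g 1 ν).toReal := by
    rw [eLpNorm_one_eq_lintegral_enorm, integral_norm_eq_lintegral_enorm
      (hmem.1 : AEStronglyMeasurable g ν)]
  calc |f y| ≤ (eLpNorm g 1 ν).toReal := by rw [← heq]; exact habs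
    _ ≤ (eLpNorm g r (volume.restrict (Set.Ioi 0)) * ENNReal.ofReal (1 + y)).toReal :=
        ENNReal.toReal_mono hfin h1
    _ = N * (1 + y) := by
        rw [ENNReal.toReal_mul, ENNReal.toReal_ofReal (by linarith)]


/-- Hölder: a Gaussian-dominated continuous function times an `L^r` function is integrable. -/
lemma holder_int {r : ℝ≥0∞} (hr : 1 ≤ r) {g : ℝ → ℝ}
    (hg : MemLp g r (volume.restrict (Set.Ioi 0)))
    {φ : ℝ → ℝ} (hφc : Continuous φ) {C b a : ℝ} (hb : 0 < b)
    (hφ : ∀ y, |φ y| ≤ C * Real.exp (-b * (y - a)^2)) :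
    Integrable (fun y => φ y * g y) (volume.restrict (Set.Ioi 0)) := by
  set μ := volume.restrict (Set.Ioi (0:ℝ)) with hμ
  have hC : 0 ≤ C := by
    have := hφ a
    simp only [sub_self] at this
    have h0 : (0:ℝ) ≤ |φ a| := abs_nonneg _
    nlinarith [Real.exp_pos (-b * (0:ℝ)^2)]
  have h1r : (1:ℝ≥0∞)/r ≤ 1 := by
    rw [one_div]
    exact ENNReal.inv_le_one.mpr hr
  set q : ℝ≥0∞ := (1 - 1/r)⁻¹ with hqdef
  have hq1 : 1/q = 1 - 1/r := by rw [hqdef, one_div, inv_inv]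
  have hq : 1/(1:ℝ≥0∞) = 1/q + 1/r := by
    rw [hq1, tsub_add_cancel_of_le h1r]
    norm_num
  have hq0 : q ≠ 0 := by
    rw [hqdef]
    simp only [ne_eq, ENNReal.inv_eq_zero]
    intro h
    have h2 : (1 - 1/r : ℝ≥0∞) ≤ 1 := tsub_le_self
    rw [h] at h2
    exact absurd h2 (by simp)
  have hφq : MemLp φ q μ := by
    rcases eq_or_ne q ∞ with hqt | hqt
    · rw [hqt]
      apply memLp_top_of_bound hφc.aestronglyMeasurable C
      filter_upwards with y
      rw [Real.norm_eq_abs]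
      calc |φ y| ≤ C * Real.exp (-b * (y - a)^2) := hφ y
        _ ≤ C * 1 := mul_le_mul_of_nonneg_left
            (Real.exp_le_one_iff.mpr (by nlinarith [sq_nonneg (y-a)])) hC
        _ = C := mul_one C
    · have he : 0 < q.toReal := ENNReal.toReal_pos hq0 hqt
      have hint : Integrable (fun y => ‖φ y‖ ^ q.toReal) μ := by
        apply Integrable.mono'
          ((((integrable_exp_neg_mul_sq (mul_pos hb he)).comp_sub_right a).const_mul
            (C ^ q.toReal)).restrict (s := Set.Ioi 0))
        · exact (hφc.norm.rpow_const (fun y => Or.inr he.le)).aestronglyMeasurable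
        · filter_upwards with y
          rw [Real.norm_eq_abs (‖φ y‖ ^ q.toReal),
            abs_of_nonneg (Real.rpow_nonneg (norm_nonneg _) q.toReal)]
          calc ‖φ y‖ ^ q.toReal ≤ (C * Real.exp (-b * (y-a)^2)) ^ q.toReal :=
                Real.rpow_le_rpow (norm_nonneg _)
                  (by rw [Real.norm_eq_abs]; exact hφ y) he.le
            _ = C ^ q.toReal * Real.exp (-(b * q.toReal) * (y-a)^2) := by
                rw [Real.mul_rpow hC (Real.exp_pos _).le, ← Real.exp_mul]
                congr 2
                ring
      have hq' : MemLp (fun y => ‖φ y‖ ^ q.toReal) (q/q) μ := by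
        rw [ENNReal.div_self hq0 hqt]
        exact memLp_one_iff_integrable.mpr hint
      exact (memLp_norm_rpow_iff hφc.aestronglyMeasurable hq0 hqt).mp hq'
  have hmul : MemLp (φ • g) 1 μ := hg.smul hφq (hpqr := ⟨by simpa [one_div] using hq.symm⟩)
  have hi := memLp_one_iff_integrable.mp hmul
  exact hi.congr (by filter_upwards with y; simp [smul_eq_mul])

end Stmt14Aux

open Set Filter Stmt14Aux

/-- Differentiation of the Dirichlet-kernel convolution: for `f` differentiable on `[0,∞)`
with `f(0) = 0` and `f, f' ∈ L^r(0,∞)`, one has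
`d/dx (Ḡ(t,·) *_D f)(x) = ∫_ℝ G(t, x−y) (f')^{even}(y) dy`, where `(f')^{even}(y) = f'(|y|)`
is the even extension of `f'`. -/
theorem stmt14 (t : ℝ) (ht : 0 < t) (r : ℝ≥0∞) (hr : 1 ≤ r)
    (f : ℝ → ℝ) (hf0 : f 0 = 0)
    (hdiff : DifferentiableOn ℝ f (Set.Ici 0))
    (hfr : MemLp f r (volume.restrict (Set.Ioi 0)))
    (hf'r : MemLp (derivWithin f (Set.Ici 0)) r (volume.restrict (Set.Ioi 0))) :
    ∀ x : ℝ, 0 < x →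
      HasDerivAt (fun z => ∫ y in Set.Ioi (0 : ℝ), (heatG t (z - y) - heatG t (z + y)) * f y)
        (∫ y : ℝ, heatG t (x - y) * derivWithin f (Set.Ici 0) |y|) x := by
  intro x hx
  set μ := volume.restrict (Set.Ioi (0:ℝ)) with hμdef
  set g : ℝ → ℝ := derivWithin f (Set.Ici 0) with hgdef
  obtain ⟨A, hA0, hA⟩ := Stmt14Aux.growth hr hf0 hdiff hf'r
  set c : ℝ := (Real.sqrt (4 * Real.pi * t))⁻¹ with hcdef
  have hc0 : 0 < c := by
    rw [hcdef]
    exact inv_pos.mpr (Real.sqrt_pos.mpr (by positivity))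
  set b : ℝ := (4*t)⁻¹ with hbdef
  have hb0 : 0 < b := by rw [hbdef]; positivity
  have hGeq : ∀ u, heatG t u = c * Real.exp (-b * u^2) := fun u => Stmt14Aux.heatG_eq t u
  have hGabs : ∀ u, |heatG t u| ≤ c * Real.exp (-b * u^2) := fun u => by
    rw [abs_of_nonneg (Stmt14Aux.heatG_nonneg t u), hGeq u]
  have hGc : Continuous (heatG t) := by
    unfold heatG; continuity
  -- differentiability of f at interior points
  have hfd : ∀ y : ℝ, 0 < y → HasDerivAt f (g y) y := fun y hy =>
    (hdiff y (le_of_lt hy)).hasDerivWithinAt.hasDerivAt (Ici_mem_nhds hy)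
  -- derivatives of the kernels in z
  have hD1 : ∀ (z y : ℝ), HasDerivAt (fun z => heatG t (z - y))
      (-((z-y)/(2*t)) * heatG t (z-y)) z := by
    intro z y
    have h := HasDerivAt.comp z (Stmt14Aux.hasDerivAt_heatG ht (z - y))
      ((hasDerivAt_id z).sub_const y)
    simpa [Function.comp_def] using h
  have hD2 : ∀ (z y : ℝ), HasDerivAt (fun z => heatG t (z + y))
      (-((z+y)/(2*t)) * heatG t (z+y)) z := by
    intro z y
    have h := HasDerivAt.comp z (Stmt14Aux.hasDerivAt_heatG ht (z + y))
      ((hasDerivAt_id z).add_const y)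
    simpa [Function.comp_def] using h
  -- pointwise bound on the kernel derivative
  set K1 : ℝ := (c/(2*t)) * Real.sqrt (2/b) with hK1def
  have hK1pos : 0 ≤ K1 := by positivity
  have hK1 : ∀ u : ℝ, |-(u/(2*t)) * heatG t u| ≤ K1 * Real.exp (-(b/2)*u^2) := by
    intro u
    rw [abs_mul, hGeq u, abs_neg, abs_div, abs_of_pos (by positivity : (0:ℝ) < 2*t),
      abs_of_pos (mul_pos hc0 (Real.exp_pos _))]
    calc |u|/(2*t) * (c * Real.exp (-b * u^2))
        = (c/(2*t)) * (|u| * Real.exp (-b * u^2)) := by ring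
      _ ≤ (c/(2*t)) * (Real.sqrt (2/b) * Real.exp (-(b/2) * u^2)) :=
          mul_le_mul_of_nonneg_left (Stmt14Aux.abs_mul_exp_le hb0 u) (by positivity)
      _ = K1 * Real.exp (-(b/2)*u^2) := by rw [hK1def]; ring
  set K2 : ℝ := K1 * Real.exp (b/2) with hK2def
  have hK2pos : 0 ≤ K2 := by positivity
  -- shifted bounds valid for z in the unit ball around x
  have hshift1 : ∀ z y : ℝ, |z - x| ≤ 1 →
      |-((z-y)/(2*t)) * heatG t (z-y)| ≤ K2 * Real.exp (-(b/4) * (y - x)^2) := by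
    intro z y hz
    have h2 : Real.exp (-(b/2)*(z-y)^2) ≤
        Real.exp (b/2) * Real.exp (-(b/2/2) * (x-y)^2) := by
      apply Stmt14Aux.exp_shift (half_pos hb0)
      rw [show z - y - (x - y) = z - x by ring]
      exact hz
    calc |-((z-y)/(2*t)) * heatG t (z-y)| ≤ K1 * Real.exp (-(b/2)*(z-y)^2) := hK1 (z-y)
      _ ≤ K1 * (Real.exp (b/2) * Real.exp (-(b/2/2) * (x-y)^2)) :=
          mul_le_mul_of_nonneg_left h2 hK1pos
      _ = K2 * Real.exp (-(b/4) * (y - x)^2) := by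
          rw [hK2def, show b/2/2 = b/4 by ring, show (x-y)^2 = (y-x)^2 by ring]
          ring
  have hshift2 : ∀ z y : ℝ, |z - x| ≤ 1 →
      |-((z+y)/(2*t)) * heatG t (z+y)| ≤ K2 * Real.exp (-(b/4) * (y - -x)^2) := by
    intro z y hz
    have h2 : Real.exp (-(b/2)*(z+y)^2) ≤
        Real.exp (b/2) * Real.exp (-(b/2/2) * (x+y)^2) := by
      apply Stmt14Aux.exp_shift (half_pos hb0)
      rw [show z + y - (x + y) = z - x by ring]
      exact hz
    calc |-((z+y)/(2*t)) * heatG t (z+y)| ≤ K1 * Real.exp (-(b/2)*(z+y)^2) := hK1 (z+y)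
      _ ≤ K1 * (Real.exp (b/2) * Real.exp (-(b/2/2) * (x+y)^2)) :=
          mul_le_mul_of_nonneg_left h2 hK1pos
      _ = K2 * Real.exp (-(b/4) * (y - -x)^2) := by
          rw [hK2def, show b/2/2 = b/4 by ring, show (x+y)^2 = (y - -x)^2 by ring]
          ring
  -- the integrand and its z-derivative
  set F : ℝ → ℝ → ℝ := fun z y => (heatG t (z - y) - heatG t (z + y)) * f y with hFdef
  set F' : ℝ → ℝ → ℝ := fun z y =>
    (-((z-y)/(2*t)) * heatG t (z-y) - -((z+y)/(2*t)) * heatG t (z+y)) * f y with hF'def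
  have hb4 : (0:ℝ) < b/4 := by positivity
  have hb2 : (0:ℝ) < b/2 := by positivity
  set bound : ℝ → ℝ := fun y =>
    (K2 * A) * (1 + y) * Real.exp (-(b/4) * (y - x)^2)
      + (K2 * A) * (1 + y) * Real.exp (-(b/4) * (y - -x)^2) with hbounddef
  have hboundint : Integrable bound μ :=
    (Stmt14Aux.int_one_add_gauss hb4 (K2*A) x).add (Stmt14Aux.int_one_add_gauss hb4 (K2*A) (-x))
  -- measurability
  have hmeasF : ∀ z : ℝ, AEStronglyMeasurable (F z) μ := by
    intro z
    apply AEStronglyMeasurable.mul _ hfr.1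
    exact (((hGc.comp (continuous_const.sub continuous_id)).sub
      (hGc.comp (continuous_const.add continuous_id)))).aestronglyMeasurable
  have hmeasF' : ∀ z : ℝ, AEStronglyMeasurable (F' z) μ := by
    intro z
    apply AEStronglyMeasurable.mul _ hfr.1
    have : Continuous fun y => -((z-y)/(2*t)) * heatG t (z-y) - -((z+y)/(2*t)) * heatG t (z+y) := by
      apply Continuous.sub
      · exact (((continuous_const.sub continuous_id).div_const _).neg).mul
          (hGc.comp (continuous_const.sub continuous_id))
      · exact (((continuous_const.add continuous_id).div_const _).neg).mul
          (hGc.comp (continuous_const.add continuous_id))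
    exact this.aestronglyMeasurable
  -- integrability of F x
  have hFint : Integrable (F x) μ := by
    apply Integrable.mono' ((Stmt14Aux.int_one_add_gauss hb0 (c*A) x).add
      (Stmt14Aux.int_one_add_gauss hb0 (c*A) (-x)))
    · exact hmeasF x
    · filter_upwards [ae_restrict_mem measurableSet_Ioi] with y hy
      have hy0 : (0:ℝ) < y := hy
      calc ‖F x y‖ = |heatG t (x - y) - heatG t (x + y)| * |f y| := by
            rw [hFdef]; exact abs_mul _ _
        _ ≤ (|heatG t (x - y)| + |heatG t (x + y)|) * |f y| :=
            mul_le_mul_of_nonneg_right (abs_sub _ _) (abs_nonneg _)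
        _ ≤ (c * Real.exp (-b * (y - x)^2) + c * Real.exp (-b * (y - -x)^2)) * (A * (1 + y)) := by
            apply mul_le_mul _ (hA y hy0.le) (abs_nonneg _) (by positivity)
            apply add_le_add
            · rw [show -b * (y-x)^2 = -b * (x-y)^2 by ring]; exact hGabs (x - y)
            · rw [show -b * (y - -x)^2 = -b * (x+y)^2 by ring]; exact hGabs (x + y)
        _ = (c*A) * (1 + y) * Real.exp (-b * (y - x)^2)
            + (c*A) * (1 + y) * Real.exp (-b * (y - -x)^2) := by ring
  -- the uniform bound on the derivative
  have h_bound : ∀ᵐ y ∂μ, ∀ z ∈ Metric.ball x 1, ‖F' z y‖ ≤ bound y := by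
    filter_upwards [ae_restrict_mem measurableSet_Ioi] with y hy z hz
    have hy0 : (0:ℝ) < y := hy
    have hz1 : |z - x| ≤ 1 := by
      rw [Metric.mem_ball, Real.dist_eq] at hz
      exact hz.le
    calc ‖F' z y‖ = |(-((z-y)/(2*t)) * heatG t (z-y) - -((z+y)/(2*t)) * heatG t (z+y))| * |f y| := by
          rw [hF'def]; exact abs_mul _ _
      _ ≤ (|-((z-y)/(2*t)) * heatG t (z-y)| + |-((z+y)/(2*t)) * heatG t (z+y)|) * |f y| :=
          mul_le_mul_of_nonneg_right (abs_sub _ _) (abs_nonneg _)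
      _ ≤ (K2 * Real.exp (-(b/4) * (y - x)^2) + K2 * Real.exp (-(b/4) * (y - -x)^2))
            * (A * (1 + y)) :=
          mul_le_mul (add_le_add (hshift1 z y hz1) (hshift2 z y hz1)) (hA y hy0.le)
            (abs_nonneg _) (by positivity)
      _ = bound y := by rw [hbounddef]; ring
  -- derivative pointwise
  have h_deriv : ∀ᵐ y ∂μ, ∀ z ∈ Metric.ball x 1, HasDerivAt (fun z => F z y) (F' z y) z := by
    filter_upwards with y z _
    exact ((hD1 z y).sub (hD2 z y)).mul_const (f y)
  obtain ⟨hF'xint, hder⟩ := hasDerivAt_integral_of_dominated_loc_of_deriv_le (Metric.ball_mem_nhds x one_pos)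
    (Eventually.of_forall hmeasF) hFint (hmeasF' x) h_bound hboundint h_deriv
  -- continuity helpers
  have hcont1 : Continuous fun y : ℝ => -((x-y)/(2*t)) * heatG t (x-y) :=
    (((continuous_const.sub continuous_id).div_const _).neg).mul
      (hGc.comp (continuous_const.sub continuous_id))
  have hcont2 : Continuous fun y : ℝ => -((x+y)/(2*t)) * heatG t (x+y) :=
    (((continuous_const.add continuous_id).div_const _).neg).mul
      (hGc.comp (continuous_const.add continuous_id))
  have hcontG1 : Continuous fun y : ℝ => heatG t (x - y) :=
    hGc.comp (continuous_const.sub continuous_id)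
  have hcontG2 : Continuous fun y : ℝ => heatG t (x + y) :=
    hGc.comp (continuous_const.add continuous_id)
  -- integrability of the four products
  have int_t1 : Integrable (fun y => (-((x-y)/(2*t)) * heatG t (x-y)) * f y) μ := by
    apply Integrable.mono' (Stmt14Aux.int_one_add_gauss hb2 (K1*A) x)
    · exact hcont1.aestronglyMeasurable.mul hfr.1
    · filter_upwards [ae_restrict_mem measurableSet_Ioi] with y hy
      have hy0 : (0:ℝ) < y := hy
      calc ‖(-((x-y)/(2*t)) * heatG t (x-y)) * f y‖
          = |(-((x-y)/(2*t)) * heatG t (x-y))| * |f y| := abs_mul _ _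
        _ ≤ (K1 * Real.exp (-(b/2) * (y - x)^2)) * (A * (1+y)) := by
            apply mul_le_mul _ (hA y hy0.le) (abs_nonneg _) (by positivity)
            rw [show -(b/2) * (y-x)^2 = -(b/2)*(x-y)^2 by ring]
            exact hK1 (x - y)
        _ = (K1*A) * (1+y) * Real.exp (-(b/2) * (y - x)^2) := by ring
  have int_t2 : Integrable (fun y => (-((x+y)/(2*t)) * heatG t (x+y)) * f y) μ := by
    apply Integrable.mono' (Stmt14Aux.int_one_add_gauss hb2 (K1*A) (-x))
    · exact hcont2.aestronglyMeasurable.mul hfr.1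
    · filter_upwards [ae_restrict_mem measurableSet_Ioi] with y hy
      have hy0 : (0:ℝ) < y := hy
      calc ‖(-((x+y)/(2*t)) * heatG t (x+y)) * f y‖
          = |(-((x+y)/(2*t)) * heatG t (x+y))| * |f y| := abs_mul _ _
        _ ≤ (K1 * Real.exp (-(b/2) * (y - -x)^2)) * (A * (1+y)) := by
            apply mul_le_mul _ (hA y hy0.le) (abs_nonneg _) (by positivity)
            rw [show -(b/2) * (y - -x)^2 = -(b/2)*(x+y)^2 by ring]
            exact hK1 (x + y)
        _ = (K1*A) * (1+y) * Real.exp (-(b/2) * (y - -x)^2) := by ring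
  have int_G1g : Integrable (fun y => heatG t (x - y) * g y) μ := by
    apply Stmt14Aux.holder_int hr hf'r hcontG1 hb0 (C := c) (a := x)
    intro y
    rw [show -b * (y-x)^2 = -b * (x-y)^2 by ring]
    exact hGabs (x - y)
  have int_G2g : Integrable (fun y => heatG t (x + y) * g y) μ := by
    apply Stmt14Aux.holder_int hr hf'r hcontG2 hb0 (C := c) (a := -x)
    intro y
    rw [show -b * (y - -x)^2 = -b * (x+y)^2 by ring]
    exact hGabs (x + y)
  -- integration by parts on (0,∞), first kernel
  have hIBP1 : ∫ y in Ioi (0:ℝ),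
      ((-((x-y)/(2*t)) * heatG t (x-y)) * f y - heatG t (x-y) * g y)
      = 0 - (-heatG t (x - 0) * f 0) := by
    apply integral_Ioi_of_hasDerivAt_of_tendsto
      (f := fun y => -heatG t (x - y) * f y)
    · exact ((hcontG1.neg).continuousWithinAt).mul
        (hdiff.continuousOn 0 Set.self_mem_Ici)
    · intro y hy
      have h1 : HasDerivAt (fun y : ℝ => heatG t (x - y))
          ((x-y)/(2*t) * heatG t (x-y)) y := by
        have h := HasDerivAt.comp y (Stmt14Aux.hasDerivAt_heatG ht (x - y))
          ((hasDerivAt_id y).const_sub x)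
        refine h.congr_deriv ?_
        ring
      have h2 := (h1.neg).mul (hfd y hy)
      refine h2.congr_deriv ?_
      simp only [Pi.neg_apply]
      ring
    · exact (int_t1.sub int_G1g)
    · apply squeeze_zero_norm'
        (a := fun y => (c*A*(1+|x|)*(1+Real.sqrt (2/b))) * Real.exp (-(b/2) * (y-x)^2))
      · filter_upwards [eventually_ge_atTop (0:ℝ)] with y hy
        calc ‖-heatG t (x - y) * f y‖ = |heatG t (x - y)| * |f y| := by
              rw [Real.norm_eq_abs, abs_mul, abs_neg]
          _ ≤ (c * Real.exp (-b * (y-x)^2)) * (A * (1 + y)) := by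
              apply mul_le_mul _ (hA y hy) (abs_nonneg _) (by positivity)
              rw [show -b * (y-x)^2 = -b * (x-y)^2 by ring]
              exact hGabs (x - y)
          _ = (c*A) * ((1 + y) * Real.exp (-b * (y-x)^2)) := by ring
          _ ≤ (c*A) * ((1+|x|)*(1+Real.sqrt (2/b)) * Real.exp (-(b/2) * (y-x)^2)) :=
              mul_le_mul_of_nonneg_left (Stmt14Aux.one_add_gauss_le hb0 x y hy)
                (by positivity)
          _ = (c*A*(1+|x|)*(1+Real.sqrt (2/b))) * Real.exp (-(b/2) * (y-x)^2) := by ring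
      · exact Stmt14Aux.tendsto_gauss hb2 _ x
  -- integration by parts on (0,∞), second kernel
  have hIBP2 : ∫ y in Ioi (0:ℝ),
      ((-((x+y)/(2*t)) * heatG t (x+y)) * f y + heatG t (x+y) * g y)
      = 0 - heatG t (x + 0) * f 0 := by
    apply integral_Ioi_of_hasDerivAt_of_tendsto
      (f := fun y => heatG t (x + y) * f y)
    · exact (hcontG2.continuousWithinAt).mul (hdiff.continuousOn 0 Set.self_mem_Ici)
    · intro y hy
      have h1 : HasDerivAt (fun y : ℝ => heatG t (x + y))
          (-((x+y)/(2*t)) * heatG t (x+y)) y := by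
        have h := HasDerivAt.comp y (Stmt14Aux.hasDerivAt_heatG ht (x + y))
          ((hasDerivAt_id y).const_add x)
        refine h.congr_deriv ?_
        ring
      exact h1.mul (hfd y hy)
    · exact (int_t2.add int_G2g)
    · apply squeeze_zero_norm'
        (a := fun y => (c*A*(1+|x|)*(1+Real.sqrt (2/b))) * Real.exp (-(b/2) * (y - -x)^2))
      · filter_upwards [eventually_ge_atTop (0:ℝ)] with y hy
        calc ‖heatG t (x + y) * f y‖ = |heatG t (x + y)| * |f y| := by
              rw [Real.norm_eq_abs, abs_mul]
          _ ≤ (c * Real.exp (-b * (y - -x)^2)) * (A * (1 + y)) := by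
              apply mul_le_mul _ (hA y hy) (abs_nonneg _) (by positivity)
              rw [show -b * (y - -x)^2 = -b * (x+y)^2 by ring]
              exact hGabs (x + y)
          _ = (c*A) * ((1 + y) * Real.exp (-b * (y - -x)^2)) := by ring
          _ ≤ (c*A) * ((1+|-x|)*(1+Real.sqrt (2/b)) * Real.exp (-(b/2) * (y - -x)^2)) :=
              mul_le_mul_of_nonneg_left (Stmt14Aux.one_add_gauss_le hb0 (-x) y hy)
                (by positivity)
          _ ≤ (c*A*(1+|x|)*(1+Real.sqrt (2/b))) * Real.exp (-(b/2) * (y - -x)^2) := by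
              rw [abs_neg]
              apply le_of_eq
              ring
      · exact Stmt14Aux.tendsto_gauss hb2 _ (-x)
  -- consequences of the IBP identities
  have hB1 : ∫ y in Ioi (0:ℝ), (-((x-y)/(2*t)) * heatG t (x-y)) * f y
      = ∫ y in Ioi (0:ℝ), heatG t (x-y) * g y := by
    have hzero : ∫ y in Ioi (0:ℝ),
        ((-((x-y)/(2*t)) * heatG t (x-y)) * f y - heatG t (x-y) * g y) = 0 := by
      rw [hIBP1, hf0]; ring
    have hsub := integral_sub int_t1 int_G1g
    rw [hsub] at hzero
    linarith
  have hB2 : ∫ y in Ioi (0:ℝ), (-((x+y)/(2*t)) * heatG t (x+y)) * f y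
      = - ∫ y in Ioi (0:ℝ), heatG t (x+y) * g y := by
    have hzero : ∫ y in Ioi (0:ℝ),
        ((-((x+y)/(2*t)) * heatG t (x+y)) * f y + heatG t (x+y) * g y) = 0 := by
      rw [hIBP2, hf0]; ring
    have hsub := integral_add int_t2 int_G2g
    rw [hsub] at hzero
    linarith
  -- value of the derivative integral
  have hsum : ∫ y, F' x y ∂μ
      = (∫ y in Ioi (0:ℝ), heatG t (x-y) * g y) + ∫ y in Ioi (0:ℝ), heatG t (x+y) * g y := by
    have h1 : ∫ y, F' x y ∂μ = ∫ y in Ioi (0:ℝ),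
        ((-((x-y)/(2*t)) * heatG t (x-y)) * f y - (-((x+y)/(2*t)) * heatG t (x+y)) * f y) := by
      apply integral_congr_ae
      filter_upwards with y
      show F' x y = _
      rw [hF'def]
      ring
    rw [h1, integral_sub int_t1 int_t2, hB1, hB2]
    ring
  -- split the right-hand side integral over ℝ
  set Φ : ℝ → ℝ := fun y => heatG t (x - y) * g |y| with hΦdef
  set Ψ : ℝ → ℝ := fun u => heatG t (x + u) * g |u| with hΨdef
  have hIoiΦ : IntegrableOn Φ (Ioi 0) volume := by
    apply int_G1g.congr
    filter_upwards [ae_restrict_mem measurableSet_Ioi] with y hy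
    rw [hΦdef]
    show heatG t (x - y) * g y = heatG t (x - y) * g |y|
    rw [abs_of_pos hy]
  have h_map_neg : (volume.restrict (Ioi (0:ℝ))).map Neg.neg = volume.restrict (Iio 0) := by
    conv_rhs => rw [← Measure.map_neg_eq_self (volume : Measure ℝ),
      measurableEmbedding_neg.restrict_map]
    simp
  have hΦneg : Integrable (Φ ∘ Neg.neg) μ := by
    apply int_G2g.congr
    filter_upwards [ae_restrict_mem measurableSet_Ioi] with y hy
    show heatG t (x + y) * g y = Φ (-y)
    rw [hΦdef]
    show heatG t (x + y) * g y = heatG t (x - -y) * g |-y|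
    rw [abs_neg, abs_of_pos hy, sub_neg_eq_add]
  have hIioΦ : IntegrableOn Φ (Iio 0) volume := by
    rw [IntegrableOn, ← h_map_neg, measurableEmbedding_neg.integrable_map_iff]
    exact hΦneg
  have hIicΦ : IntegrableOn Φ (Iic 0) volume := (integrableOn_Iic_iff_integrableOn_Iio).mpr hIioΦ
  have hIicval : ∫ y in Iic (0:ℝ), Φ y = ∫ y in Ioi (0:ℝ), heatG t (x + y) * g y := by
    have h1 : ∫ y in Iic (0:ℝ), Φ y = ∫ y in Iic (0:ℝ), Ψ (-y) := by
      apply integral_congr_ae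
      filter_upwards with y
      rw [hΦdef, hΨdef]
      show heatG t (x - y) * g |y| = heatG t (x + -y) * g |-y|
      rw [abs_neg, ← sub_eq_add_neg]
    rw [h1, integral_comp_neg_Iic (0:ℝ) Ψ, neg_zero]
    apply integral_congr_ae
    filter_upwards [ae_restrict_mem measurableSet_Ioi] with u hu
    rw [hΨdef]
    show heatG t (x + u) * g |u| = heatG t (x + u) * g u
    rw [abs_of_pos hu]
  have hIoival : ∫ y in Ioi (0:ℝ), Φ y = ∫ y in Ioi (0:ℝ), heatG t (x - y) * g y := by
    apply integral_congr_ae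
    filter_upwards [ae_restrict_mem measurableSet_Ioi] with y hy
    rw [hΦdef]
    show heatG t (x - y) * g |y| = heatG t (x - y) * g y
    rw [abs_of_pos hy]
  have hsplit : (∫ y in Iic (0:ℝ), Φ y) + ∫ y in Ioi (0:ℝ), Φ y = ∫ y : ℝ, Φ y :=
    intervalIntegral.integral_Iic_add_Ioi hIicΦ hIoiΦ
  -- conclude
  refine hder.congr_deriv ?_
  rw [hsum, ← hsplit, hIicval, hIoival]
  ring
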